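/- arXiv:1604.00870 — 2 statements merged into one kernel-verified Lean document; each statement's English description precedes it below -/
import Mathlib

section
/- Let P be the transition matrix of the gladiator chain G_k(n) on S_n with team strengths s_1,…,s_k > 0 and s(g) the strength of gladiator g. Define the weight w(σ) = ∏_{g=1}^{n} s(g)^{σ^{-1}(g)}, where σ^{-1}(g) is the position of g in σ. Then w satisfies detailed balance: w(σ)·P(σ,τ) = w(τ)·P(τ,σ) for all σ, τ ∈ S_n. Consequently, the probability distribution π(σ) = w(σ)/∑_{τ∈S_n} w(τ) is a reversible (hence stationary) distribution for G_k(n). -/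
open Finset

/-- Transition matrix of the gladiator chain `G_k(n)`: from state `σ`, a position
`i` with `i+1 < n` is chosen uniformly at random; with probability
`s(σ i)/(s(σ i)+s(σ (i+1)))` the two entries are swapped, and with the complementary
probability they stay. -/
noncomputable def gladP (n k : ℕ) (team : Fin n → Fin k) (s : Fin k → ℝ) :
    Matrix (Equiv.Perm (Fin n)) (Equiv.Perm (Fin n)) ℝ :=
  fun σ τ => (1 / ((n : ℝ) - 1)) * ∑ i : Fin n, ∑ j : Fin n,
    if (j : ℕ) = (i : ℕ) + 1 then
      (s (team (σ i)) / (s (team (σ i)) + s (team (σ j)))) *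
        (if τ = σ * Equiv.swap i j then 1 else 0)
      + (s (team (σ j)) / (s (team (σ i)) + s (team (σ j)))) *
        (if τ = σ then 1 else 0)
    else 0

/-- Unnormalized stationary weight of the gladiator chain:
`w(σ) = ∏_g s(g)^{σ⁻¹(g)}` (positions counted `1,…,n`). -/
noncomputable def gladW (n k : ℕ) (team : Fin n → Fin k) (s : Fin k → ℝ)
    (σ : Equiv.Perm (Fin n)) : ℝ :=
  ∏ g : Fin n, s (team g) ^ ((σ.symm g : ℕ) + 1)

/-- Stationary distribution of the gladiator chain. -/
noncomputable def gladPi (n k : ℕ) (team : Fin n → Fin k) (s : Fin k → ℝ)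
    (σ : Equiv.Perm (Fin n)) : ℝ :=
  gladW n k team s σ / ∑ τ : Equiv.Perm (Fin n), gladW n k team s τ

lemma gladW_eq (n k : ℕ) (team : Fin n → Fin k) (s : Fin k → ℝ)
    (σ : Equiv.Perm (Fin n)) :
    gladW n k team s σ = ∏ p : Fin n, s (team (σ p)) ^ ((p : ℕ) + 1) := by
  rw [gladW, ← Equiv.prod_comp σ (fun g => s (team g) ^ ((σ.symm g : ℕ) + 1))]
  simp

lemma gladW_pos (n k : ℕ) (team : Fin n → Fin k) (s : Fin k → ℝ)
    (hs : ∀ j, 0 < s j) (σ : Equiv.Perm (Fin n)) : 0 < gladW n k team s σ :=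
  Finset.prod_pos fun _ _ => pow_pos (hs _) _

lemma wkey (n k : ℕ) (team : Fin n → Fin k) (s : Fin k → ℝ)
    (σ : Equiv.Perm (Fin n)) (i j : Fin n) (hij : (j : ℕ) = (i : ℕ) + 1) :
    gladW n k team s (σ * Equiv.swap i j) * s (team (σ j)) =
      gladW n k team s σ * s (team (σ i)) := by
  have hne : i ≠ j := fun h => by rw [h] at hij; omega
  have hW : gladW n k team s (σ * Equiv.swap i j) =
      ∏ p : Fin n, s (team (σ p)) ^ ((Equiv.swap i j p : ℕ) + 1) := by
    rw [gladW_eq, ← Equiv.prod_comp (Equiv.swap i j)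
      (fun p => s (team (σ p)) ^ ((Equiv.swap i j p : ℕ) + 1))]
    simp [Equiv.Perm.mul_apply, Equiv.swap_apply_self]
  have split : ∀ e : Fin n → ℕ, (∏ p : Fin n, s (team (σ p)) ^ e p) =
      s (team (σ i)) ^ e i * (s (team (σ j)) ^ e j *
        ∏ p ∈ (univ.erase i).erase j, s (team (σ p)) ^ e p) := by
    intro e
    rw [← Finset.mul_prod_erase univ _ (mem_univ i),
      ← Finset.mul_prod_erase (univ.erase i) _
        (Finset.mem_erase.mpr ⟨hne.symm, mem_univ j⟩)]
  have hrest : (∏ p ∈ (univ.erase i).erase j,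
        s (team (σ p)) ^ ((Equiv.swap i j p : ℕ) + 1)) =
      ∏ p ∈ (univ.erase i).erase j, s (team (σ p)) ^ ((p : ℕ) + 1) := by
    refine Finset.prod_congr rfl fun p hp => ?_
    have h1 : p ≠ j := (Finset.mem_erase.mp hp).1
    have h2 : p ≠ i := (Finset.mem_erase.mp (Finset.mem_erase.mp hp).2).1
    rw [Equiv.swap_apply_of_ne_of_ne h2 h1]
  rw [hW, gladW_eq, split (fun p => ((Equiv.swap i j p : ℕ) + 1)),
    split (fun p => ((p : ℕ) + 1)), hrest, Equiv.swap_apply_left,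
    Equiv.swap_apply_right, hij]
  ring

lemma db_w (n k : ℕ) (team : Fin n → Fin k) (s : Fin k → ℝ)
    (σ τ : Equiv.Perm (Fin n)) :
    gladW n k team s σ * gladP n k team s σ τ =
      gladW n k team s τ * gladP n k team s τ σ := by
  simp only [gladP]
  rw [mul_left_comm, mul_left_comm (gladW n k team s τ)]
  congr 1
  rw [Finset.mul_sum, Finset.mul_sum]
  refine Finset.sum_congr rfl fun i _ => ?_
  rw [Finset.mul_sum, Finset.mul_sum]
  refine Finset.sum_congr rfl fun j _ => ?_
  by_cases hij : (j : ℕ) = (i : ℕ) + 1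
  · rw [if_pos hij, if_pos hij]
    have hne : i ≠ j := fun h => by rw [h] at hij; omega
    have hsw : σ * Equiv.swap i j ≠ σ := by
      intro h
      have h1 : Equiv.swap i j = 1 := by
        have := h.trans (mul_one σ).symm
        exact mul_left_cancel this
      have : j = i := by rw [← Equiv.swap_apply_left i j, h1]; rfl
      exact hne this.symm
    by_cases h1 : τ = σ * Equiv.swap i j
    · subst h1
      have h2 : σ = σ * Equiv.swap i j * Equiv.swap i j := by
        rw [mul_assoc, Equiv.swap_mul_self, mul_one]
      rw [if_pos rfl, if_pos h2, if_neg hsw, if_neg (fun h => hsw h.symm)]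
      simp only [Equiv.Perm.mul_apply, Equiv.swap_apply_left,
        Equiv.swap_apply_right, mul_one, mul_zero, add_zero]
      rw [← mul_div_assoc, ← mul_div_assoc, wkey n k team s σ i j hij,
        add_comm (s (team (σ j)))]
    · have h1' : σ ≠ τ * Equiv.swap i j := by
        intro h; apply h1; rw [h, mul_assoc, Equiv.swap_mul_self, mul_one]
      by_cases h2 : τ = σ
      · subst h2; rfl
      · rw [if_neg h1, if_neg h1', if_neg h2, if_neg (fun h => h2 h.symm)]
        ring
  · rw [if_neg hij, if_neg hij]; ring

lemma count_pairs (n : ℕ) (hn : 2 ≤ n) :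
    (∑ i : Fin n, ∑ j : Fin n, if (j : ℕ) = (i : ℕ) + 1 then (1 : ℝ) else 0)
      = (n : ℝ) - 1 := by
  obtain ⟨m, rfl⟩ : ∃ m, n = m + 1 := ⟨n - 1, by omega⟩
  have h1 : ∀ i : Fin (m + 1),
      (∑ j : Fin (m + 1), if (j : ℕ) = (i : ℕ) + 1 then (1 : ℝ) else 0) =
        if (i : ℕ) < m then 1 else 0 := by
    intro i
    by_cases h : (i : ℕ) < m
    · rw [if_pos h,
        Finset.sum_eq_single (⟨(i : ℕ) + 1, by omega⟩ : Fin (m + 1))]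
      · simp
      · intro j _ hj
        rw [if_neg]
        intro hc
        exact hj (Fin.ext hc)
      · intro h'; exact absurd (Finset.mem_univ _) h'
    · rw [if_neg h, Finset.sum_eq_zero]
      intro j _
      rw [if_neg]
      have := j.isLt
      omega
  rw [Finset.sum_congr rfl fun i _ => h1 i]
  have h2 : (univ.filter (fun i : Fin (m + 1) => (i : ℕ) < m)) =
      univ.erase (Fin.last m) := by
    ext i
    simp only [Finset.mem_filter, Finset.mem_univ, true_and, Finset.mem_erase,
      and_true]
    constructor
    · intro h hc
      rw [hc] at h
      simp [Fin.last] at h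
    · intro h
      have := i.isLt
      have : (i : ℕ) ≠ m := fun hc => h (Fin.ext (by simpa [Fin.last] using hc))
      omega
  rw [Finset.sum_boole, h2, Finset.card_erase_of_mem (mem_univ _)]
  simp

lemma rowSum (n k : ℕ) (hn : 2 ≤ n) (team : Fin n → Fin k) (s : Fin k → ℝ)
    (hs : ∀ j, 0 < s j) (σ : Equiv.Perm (Fin n)) :
    ∑ τ : Equiv.Perm (Fin n), gladP n k team s σ τ = 1 := by
  simp only [gladP]
  rw [← Finset.mul_sum, Finset.sum_comm]
  have key : ∀ i j : Fin n, (∑ τ : Equiv.Perm (Fin n),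
      if (j : ℕ) = (i : ℕ) + 1 then
        (s (team (σ i)) / (s (team (σ i)) + s (team (σ j)))) *
          (if τ = σ * Equiv.swap i j then 1 else 0)
        + (s (team (σ j)) / (s (team (σ i)) + s (team (σ j)))) *
          (if τ = σ then 1 else 0)
      else 0) = if (j : ℕ) = (i : ℕ) + 1 then (1 : ℝ) else 0 := by
    intro i j
    by_cases hij : (j : ℕ) = (i : ℕ) + 1
    · simp only [if_pos hij]
      rw [Finset.sum_add_distrib, ← Finset.mul_sum, ← Finset.mul_sum]
      have e1 : (∑ τ : Equiv.Perm (Fin n),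
          if τ = σ * Equiv.swap i j then (1 : ℝ) else 0) = 1 := by simp
      have e2 : (∑ τ : Equiv.Perm (Fin n),
          if τ = σ then (1 : ℝ) else 0) = 1 := by simp
      have hsum : s (team (σ i)) + s (team (σ j)) ≠ 0 := (add_pos (hs _) (hs _)).ne'
      rw [e1, e2, mul_one, mul_one, ← add_div, div_self hsum]
    · simp [hij]
  have h2 : (∑ i : Fin n, ∑ τ : Equiv.Perm (Fin n), ∑ j : Fin n,
      if (j : ℕ) = (i : ℕ) + 1 then
        (s (team (σ i)) / (s (team (σ i)) + s (team (σ j)))) *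
          (if τ = σ * Equiv.swap i j then 1 else 0)
        + (s (team (σ j)) / (s (team (σ i)) + s (team (σ j)))) *
          (if τ = σ then 1 else 0)
      else 0) = ∑ i : Fin n, ∑ j : Fin n,
        if (j : ℕ) = (i : ℕ) + 1 then (1 : ℝ) else 0 := by
    refine Finset.sum_congr rfl fun i _ => ?_
    rw [Finset.sum_comm]
    exact Finset.sum_congr rfl fun j _ => key i j
  rw [h2, count_pairs n hn, one_div, inv_mul_cancel₀]
  have : (2 : ℝ) ≤ (n : ℝ) := by exact_mod_cast hn
  linarith

/-- The weight `w(σ) = ∏_g s(g)^{σ⁻¹(g)}` satisfies detailed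
balance for the gladiator chain `G_k(n)`; consequently `π = w/∑w` is a probability
distribution which is reversible (hence stationary) for `G_k(n)`. -/
theorem gladiator_detailed_balance (n k : ℕ) (hn : 2 ≤ n)
    (team : Fin n → Fin k) (s : Fin k → ℝ) (hs : ∀ j, 0 < s j) :
    (∀ σ τ : Equiv.Perm (Fin n),
        gladW n k team s σ * gladP n k team s σ τ =
          gladW n k team s τ * gladP n k team s τ σ) ∧
    (∀ σ : Equiv.Perm (Fin n), 0 ≤ gladPi n k team s σ) ∧
    (∑ σ : Equiv.Perm (Fin n), gladPi n k team s σ) = 1 ∧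
    (∀ σ τ : Equiv.Perm (Fin n),
        gladPi n k team s σ * gladP n k team s σ τ =
          gladPi n k team s τ * gladP n k team s τ σ) ∧
    (∀ τ : Equiv.Perm (Fin n),
        ∑ σ : Equiv.Perm (Fin n), gladPi n k team s σ * gladP n k team s σ τ =
          gladPi n k team s τ) := by
  have hWpos : (0 : ℝ) < ∑ τ : Equiv.Perm (Fin n), gladW n k team s τ :=
    Finset.sum_pos (fun τ _ => gladW_pos n k team s hs τ)
      Finset.univ_nonempty
  have hpi_db : ∀ σ τ : Equiv.Perm (Fin n),
      gladPi n k team s σ * gladP n k team s σ τ =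
        gladPi n k team s τ * gladP n k team s τ σ := by
    intro σ τ
    simp only [gladPi, div_mul_eq_mul_div]
    rw [db_w]
  refine ⟨db_w n k team s, fun σ => ?_, ?_, hpi_db, fun τ => ?_⟩
  · exact div_nonneg (gladW_pos n k team s hs σ).le hWpos.le
  · simp only [gladPi]
    rw [← Finset.sum_div, div_self hWpos.ne']
  · rw [Finset.sum_congr rfl fun σ _ => hpi_db σ τ, ← Finset.mul_sum,
      rowSum n k hn team s hs τ, mul_one]
end

section
/- Let P be the transition matrix of the linear particle system X_k(n) on the state space Ω_{n_1,…,n_k} with type strengths s_1,…,s_k > 0. Define the weight w(v) = ∏_{i=1}^{n} s_{v(i)}^{i} for a word v ∈ Ω_{n_1,…,n_k}. Then w satisfies detailed balance: w(v)·P(v,u) = w(u)·P(u,v) for all u, v ∈ Ω_{n_1,…,n_k}. Consequently, π(v) = w(v)/∑_{u} w(u) is a reversible (hence stationary) distribution for X_k(n). -/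
open Finset

/-- State space `Ω_{n₁,…,n_k}` of the linear particle system: words of length `n`
over `{1,…,k}` with exactly `cnt j` letters equal to `j`. -/
abbrev PSpace (n k : ℕ) (cnt : Fin k → ℕ) : Type :=
  {w : Fin n → Fin k // ∀ j : Fin k, (Finset.univ.filter fun i => w i = j).card = cnt j}

/-- Transition matrix of the linear particle system `X_k(n)`: from state `v`, a
position `i` with `i+1 < n` is chosen uniformly; if the two letters are equal nothing
happens, otherwise they are swapped with probability `s(v i)/(s(v i)+s(v (i+1)))`. -/
noncomputable def partP (n k : ℕ) (cnt : Fin k → ℕ) (s : Fin k → ℝ) :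
    Matrix (PSpace n k cnt) (PSpace n k cnt) ℝ :=
  fun v u => (1 / ((n : ℝ) - 1)) * ∑ i : Fin n, ∑ j : Fin n,
    if (j : ℕ) = (i : ℕ) + 1 then
      if v.1 i = v.1 j then (if u = v then 1 else 0)
      else
        (s (v.1 i) / (s (v.1 i) + s (v.1 j))) *
          (if u.1 = v.1 ∘ Equiv.swap i j then 1 else 0)
        + (s (v.1 j) / (s (v.1 i) + s (v.1 j))) *
          (if u = v then 1 else 0)
    else 0

/-- Unnormalized stationary weight of the linear particle system:
`w(v) = ∏_i s(v i)^i` (positions counted `1,…,n`). -/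
noncomputable def partW (n k : ℕ) (cnt : Fin k → ℕ) (s : Fin k → ℝ)
    (v : PSpace n k cnt) : ℝ :=
  ∏ i : Fin n, s (v.1 i) ^ ((i : ℕ) + 1)

/-- Stationary distribution of the linear particle system. -/
noncomputable def partPi (n k : ℕ) (cnt : Fin k → ℕ) (s : Fin k → ℝ)
    (v : PSpace n k cnt) : ℝ :=
  partW n k cnt s v / ∑ u : PSpace n k cnt, partW n k cnt s u


section ParticleAux

open Finset

lemma count_comp_perm {n k : ℕ} (w : Fin n → Fin k) (σ : Equiv.Perm (Fin n)) (j : Fin k) :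
    (Finset.univ.filter fun i => w (σ i) = j).card
      = (Finset.univ.filter fun i => w i = j).card := by
  apply Finset.card_equiv σ
  intro i
  simp

/-- The state obtained by swapping positions `i` and `j`. -/
noncomputable def swapped {n k : ℕ} {cnt : Fin k → ℕ} (v : PSpace n k cnt) (i j : Fin n) :
    PSpace n k cnt :=
  ⟨v.1 ∘ Equiv.swap i j, fun t => (count_comp_perm v.1 (Equiv.swap i j) t).trans (v.2 t)⟩

lemma pspace_nonempty (k : ℕ) (cnt : Fin k → ℕ) : Nonempty (PSpace (∑ j, cnt j) k cnt) := by
  have e : (Σ j : Fin k, Fin (cnt j)) ≃ Fin (∑ j, cnt j) :=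
    Fintype.equivOfCardEq (by simp)
  refine ⟨⟨fun i => (e.symm i).1, fun j => ?_⟩⟩
  have h1 : (Finset.univ.filter fun i => (e.symm i).1 = j).card
      = (Finset.univ.filter fun p : Σ j' : Fin k, Fin (cnt j') => p.1 = j).card := by
    apply Finset.card_equiv e.symm
    intro i
    simp
  rw [h1, Finset.card_filter]
  rw [← Finset.univ_sigma_univ, Finset.sum_sigma]
  simp only [Finset.sum_ite_eq, Finset.mem_univ, if_true]
  simp [apply_ite Finset.card]

lemma partW_pos {n k : ℕ} {cnt : Fin k → ℕ} {s : Fin k → ℝ} (hs : ∀ j, 0 < s j)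
    (v : PSpace n k cnt) : 0 < partW n k cnt s v :=
  Finset.prod_pos fun i _ => pow_pos (hs _) _

lemma partW_swap {n k : ℕ} {cnt : Fin k → ℕ} {s : Fin k → ℝ}
    (v u : PSpace n k cnt) (i j : Fin n) (hij : (j : ℕ) = (i : ℕ) + 1)
    (h : u.1 = v.1 ∘ Equiv.swap i j) :
    partW n k cnt s v * s (v.1 i) = partW n k cnt s u * s (v.1 j) := by
  have hne : j ≠ i := by intro h'; rw [h'] at hij; omega
  have key : ∀ w : Fin n → Fin k, (∏ m : Fin n, s (w m) ^ ((m : ℕ) + 1))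
      = s (w i) ^ ((i : ℕ) + 1) * (s (w j) ^ ((j : ℕ) + 1)
        * ∏ m ∈ (Finset.univ.erase i).erase j, s (w m) ^ ((m : ℕ) + 1)) := by
    intro w
    rw [← Finset.mul_prod_erase Finset.univ _ (Finset.mem_univ i),
      ← Finset.mul_prod_erase _ _ (Finset.mem_erase.2 ⟨hne, Finset.mem_univ j⟩)]
  have hui : u.1 i = v.1 j := by rw [h]; simp
  have huj : u.1 j = v.1 i := by rw [h]; simp
  have hrest : ∀ m ∈ (Finset.univ.erase i).erase j,
      s (u.1 m) ^ ((m : ℕ) + 1) = s (v.1 m) ^ ((m : ℕ) + 1) := by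
    intro m hm
    rw [Finset.mem_erase, Finset.mem_erase] at hm
    rw [h]
    simp [Function.comp, Equiv.swap_apply_of_ne_of_ne hm.2.1 hm.1]
  unfold partW
  rw [key v.1, key u.1, hui, huj, Finset.prod_congr rfl hrest, hij]
  ring

lemma db_term {n k : ℕ} {cnt : Fin k → ℕ} {s : Fin k → ℝ} (hs : ∀ j, 0 < s j)
    (v u : PSpace n k cnt) (i j : Fin n) (hij : (j : ℕ) = (i : ℕ) + 1) :
    partW n k cnt s v * (if v.1 i = v.1 j then (if u = v then (1:ℝ) else 0) else
        (s (v.1 i) / (s (v.1 i) + s (v.1 j))) * (if u.1 = v.1 ∘ Equiv.swap i j then 1 else 0)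
        + (s (v.1 j) / (s (v.1 i) + s (v.1 j))) * (if u = v then 1 else 0))
    = partW n k cnt s u * (if u.1 i = u.1 j then (if v = u then (1:ℝ) else 0) else
        (s (u.1 i) / (s (u.1 i) + s (u.1 j))) * (if v.1 = u.1 ∘ Equiv.swap i j then 1 else 0)
        + (s (u.1 j) / (s (u.1 i) + s (u.1 j))) * (if v = u then 1 else 0)) := by
  by_cases huv : u = v
  · subst huv; rfl
  · have hvu : v ≠ u := Ne.symm huv
    simp only [if_neg huv, if_neg hvu, mul_zero, add_zero]
    by_cases hsw : u.1 = v.1 ∘ Equiv.swap i j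
    · have hui : u.1 i = v.1 j := by rw [hsw]; simp
      have huj : u.1 j = v.1 i := by rw [hsw]; simp
      have hsw' : v.1 = u.1 ∘ Equiv.swap i j := by
        funext m; simp [hsw, Function.comp, Equiv.swap_apply_self]
      by_cases hvv : v.1 i = v.1 j
      · have huu : u.1 i = u.1 j := by rw [hui, huj, hvv]
        simp [hvv, huu]
      · have huu : u.1 i ≠ u.1 j := by rw [hui, huj]; exact fun h' => hvv h'.symm
        rw [if_neg hvv, if_neg huu, if_pos hsw, if_pos hsw', mul_one, mul_one, hui, huj,
          add_comm (s (v.1 j)) (s (v.1 i)), ← mul_div_assoc, ← mul_div_assoc,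
          partW_swap v u i j hij hsw]
    · have hsw' : v.1 ≠ u.1 ∘ Equiv.swap i j := by
        intro h'; apply hsw; funext m
        rw [h']; simp [Function.comp, Equiv.swap_apply_self]
      simp [hsw, hsw']

lemma particle_db {n k : ℕ} {cnt : Fin k → ℕ} {s : Fin k → ℝ} (hs : ∀ j, 0 < s j)
    (v u : PSpace n k cnt) :
    partW n k cnt s v * partP n k cnt s v u = partW n k cnt s u * partP n k cnt s u v := by
  unfold partP
  rw [mul_left_comm, mul_left_comm (partW n k cnt s u)]
  congr 1
  rw [Finset.mul_sum, Finset.mul_sum]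
  refine Finset.sum_congr rfl fun i _ => ?_
  rw [Finset.mul_sum, Finset.mul_sum]
  refine Finset.sum_congr rfl fun j _ => ?_
  by_cases hij : (j : ℕ) = (i : ℕ) + 1
  · simp only [if_pos hij]
    exact db_term hs v u i j hij
  · simp [hij]

lemma particle_rowsum {n k : ℕ} {cnt : Fin k → ℕ} {s : Fin k → ℝ} (hn : 2 ≤ n)
    (hs : ∀ j, 0 < s j) (u : PSpace n k cnt) :
    ∑ v : PSpace n k cnt, partP n k cnt s u v = 1 := by
  unfold partP
  rw [← Finset.mul_sum]
  have hterm : ∀ i j : Fin n, (∑ v : PSpace n k cnt,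
      (if (j : ℕ) = (i : ℕ) + 1 then
        if u.1 i = u.1 j then (if v = u then (1:ℝ) else 0)
        else (s (u.1 i) / (s (u.1 i) + s (u.1 j))) *
            (if v.1 = u.1 ∘ Equiv.swap i j then 1 else 0)
          + (s (u.1 j) / (s (u.1 i) + s (u.1 j))) * (if v = u then 1 else 0)
      else 0)) = if (j : ℕ) = (i : ℕ) + 1 then 1 else 0 := by
    intro i j
    by_cases hij : (j : ℕ) = (i : ℕ) + 1
    · simp only [if_pos hij]
      by_cases h : u.1 i = u.1 j
      · simp only [if_pos h]
        simp [Finset.sum_ite_eq']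
      · simp only [if_neg h]
        rw [Finset.sum_add_distrib, ← Finset.mul_sum, ← Finset.mul_sum]
        have h1 : (∑ v : PSpace n k cnt,
            (if v.1 = u.1 ∘ Equiv.swap i j then (1:ℝ) else 0)) = 1 := by
          have heq : ∀ v : PSpace n k cnt,
              (v.1 = u.1 ∘ Equiv.swap i j) ↔ v = swapped u i j :=
            fun v => ⟨fun h' => Subtype.ext h', fun h' => congrArg Subtype.val h'⟩
          simp only [heq]
          simp [Finset.sum_ite_eq']
        have h2 : (∑ v : PSpace n k cnt, (if v = u then (1:ℝ) else 0)) = 1 := by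
          simp [Finset.sum_ite_eq']
        rw [h1, h2, mul_one, mul_one, ← add_div,
          div_self (ne_of_gt (add_pos (hs (u.1 i)) (hs (u.1 j))))]
    · simp [hij]
  rw [Finset.sum_comm]
  rw [Finset.sum_congr rfl fun (i : Fin n) (_ : i ∈ Finset.univ) => Finset.sum_comm]
  rw [Finset.sum_congr rfl fun (i : Fin n) (_ : i ∈ Finset.univ) =>
    Finset.sum_congr rfl fun (j : Fin n) (_ : j ∈ Finset.univ) => hterm i j]
  have hcount : (∑ i : Fin n, ∑ j : Fin n, (if (j : ℕ) = (i : ℕ) + 1 then (1:ℝ) else 0))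
      = (n : ℝ) - 1 := by
    have hinner : ∀ i : Fin n, (∑ j : Fin n, (if (j : ℕ) = (i : ℕ) + 1 then (1:ℝ) else 0))
        = if (i : ℕ) + 1 < n then 1 else 0 := by
      intro i
      by_cases h : (i : ℕ) + 1 < n
      · rw [if_pos h]
        have heq : ∀ j : Fin n, ((j : ℕ) = (i : ℕ) + 1) ↔ j = ⟨(i : ℕ) + 1, h⟩ :=
          fun j => ⟨fun hh => Fin.ext hh, fun hh => by rw [hh]⟩
        simp only [heq]
        simp [Finset.sum_ite_eq']
      · rw [if_neg h]
        apply Finset.sum_eq_zero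
        intro j _
        rw [if_neg]
        intro hh
        exact h (hh ▸ j.2)
    rw [Finset.sum_congr rfl fun (i : Fin n) (_ : i ∈ Finset.univ) => hinner i]
    rw [Fin.sum_univ_eq_sum_range (fun t => if t + 1 < n then (1:ℝ) else 0)]
    rw [Finset.sum_boole]
    have hfil : Finset.filter (fun t => t + 1 < n) (Finset.range n) = Finset.range (n - 1) := by
      ext t; simp; omega
    rw [hfil, Finset.card_range]
    rw [Nat.cast_sub (by omega)]
    simp
  rw [hcount, one_div, inv_mul_cancel₀]
  have h2n : (2 : ℝ) ≤ (n : ℝ) := by exact_mod_cast hn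
  linarith

end ParticleAux

/-- The weight `w(v) = ∏_i s_{v(i)}^i` satisfies detailed balance
for the linear particle system `X_k(n)` on `Ω_{n₁,…,n_k}` (`n = n₁+⋯+n_k`);
consequently `π = w/∑w` is a probability distribution which is reversible (hence
stationary) for `X_k(n)`. -/
theorem particle_detailed_balance (k : ℕ) (cnt : Fin k → ℕ) (hn : 2 ≤ ∑ j, cnt j)
    (s : Fin k → ℝ) (hs : ∀ j, 0 < s j) :
    (∀ v u : PSpace (∑ j, cnt j) k cnt,
        partW (∑ j, cnt j) k cnt s v * partP (∑ j, cnt j) k cnt s v u =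
          partW (∑ j, cnt j) k cnt s u * partP (∑ j, cnt j) k cnt s u v) ∧
    (∀ v : PSpace (∑ j, cnt j) k cnt, 0 ≤ partPi (∑ j, cnt j) k cnt s v) ∧
    (∑ v : PSpace (∑ j, cnt j) k cnt, partPi (∑ j, cnt j) k cnt s v) = 1 ∧
    (∀ v u : PSpace (∑ j, cnt j) k cnt,
        partPi (∑ j, cnt j) k cnt s v * partP (∑ j, cnt j) k cnt s v u =
          partPi (∑ j, cnt j) k cnt s u * partP (∑ j, cnt j) k cnt s u v) ∧
    (∀ u : PSpace (∑ j, cnt j) k cnt,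
        ∑ v : PSpace (∑ j, cnt j) k cnt,
          partPi (∑ j, cnt j) k cnt s v * partP (∑ j, cnt j) k cnt s v u =
          partPi (∑ j, cnt j) k cnt s u) := by
  have hne : Nonempty (PSpace (∑ j, cnt j) k cnt) := pspace_nonempty k cnt
  haveI := hne
  have hSpos : 0 < ∑ u : PSpace (∑ j, cnt j) k cnt, partW (∑ j, cnt j) k cnt s u :=
    Finset.sum_pos (fun u _ => partW_pos hs u) Finset.univ_nonempty
  have hrev : ∀ v u : PSpace (∑ j, cnt j) k cnt,
      partPi (∑ j, cnt j) k cnt s v * partP (∑ j, cnt j) k cnt s v u =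
        partPi (∑ j, cnt j) k cnt s u * partP (∑ j, cnt j) k cnt s u v := by
    intro v u
    unfold partPi
    rw [div_mul_eq_mul_div, div_mul_eq_mul_div, particle_db hs v u]
  refine ⟨fun v u => particle_db hs v u,
    fun v => div_nonneg (partW_pos hs v).le hSpos.le, ?_, hrev, ?_⟩
  · unfold partPi
    rw [← Finset.sum_div, div_self hSpos.ne']
  · intro u
    calc ∑ v : PSpace (∑ j, cnt j) k cnt,
          partPi (∑ j, cnt j) k cnt s v * partP (∑ j, cnt j) k cnt s v u
        = ∑ v : PSpace (∑ j, cnt j) k cnt,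
          partPi (∑ j, cnt j) k cnt s u * partP (∑ j, cnt j) k cnt s u v :=
          Finset.sum_congr rfl fun v _ => hrev v u
      _ = partPi (∑ j, cnt j) k cnt s u *
          ∑ v : PSpace (∑ j, cnt j) k cnt, partP (∑ j, cnt j) k cnt s u v := by
          rw [Finset.mul_sum]
      _ = partPi (∑ j, cnt j) k cnt s u := by
          rw [particle_rowsum hn hs u, mul_one]
end
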